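/- There exists a topological space that is KC (every compact subset is closed) but not k₁-Hausdorff. -/

import Mathlib

open Set Filter Topology

universe u

/-- A subset `C` of a space `X` is k₁-closed provided for every compact subset `K` of `X`,
the intersection `C ∩ K` is closed in the subspace topology on `K`. -/
def IsK1Closed {X : Type u} [TopologicalSpace X] (C : Set X) : Prop :=
  ∀ K : Set X, IsCompact K → IsClosed ((Subtype.val : K → X) ⁻¹' C)

/-- A space is k₁-Hausdorff provided its diagonal is k₁-closed in its square. -/
def K1Hausdorff (X : Type u) [TopologicalSpace X] : Prop :=
  IsK1Closed {p : X × X | p.1 = p.2}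

/-- A space is KC provided every compact subset is closed. -/
def KCSpace (X : Type u) [TopologicalSpace X] : Prop :=
  ∀ K : Set X, IsCompact K → IsClosed K

/-- A space `X` is weakly Hausdorff provided for every compact Hausdorff space `K` and
continuous `f : K → X`, the image of `f` is closed in `X`. -/
def WeaklyHausdorff (X : Type u) [TopologicalSpace X] : Prop :=
  ∀ (K : Type u) [TopologicalSpace K] [CompactSpace K] [T2Space K]
    (f : K → X), Continuous f → IsClosed (Set.range f)

/-- A subset `C` of `X` is k₂-closed provided for every compact Hausdorff space `K` and
continuous `f : K → X`, the preimage `f ⁻¹' C` is closed in `K`. -/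
def IsK2Closed {X : Type u} [TopologicalSpace X] (C : Set X) : Prop :=
  ∀ (K : Type u) [TopologicalSpace K] [CompactSpace K] [T2Space K]
    (f : K → X), Continuous f → IsClosed (f ⁻¹' C)

/-- A space is k₂-Hausdorff provided its diagonal is k₂-closed in its square. -/
def K2Hausdorff (X : Type u) [TopologicalSpace X] : Prop :=
  IsK2Closed {p : X × X | p.1 = p.2}

/-- A space has unique sequential limits provided every convergent sequence has a unique limit. -/
def UniqueSequentialLimits (X : Type u) [TopologicalSpace X] : Prop :=
  ∀ (a : ℕ → X) (l₀ l₁ : X),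
    Filter.Tendsto a Filter.atTop (nhds l₀) →
    Filter.Tendsto a Filter.atTop (nhds l₁) → l₀ = l₁

open OnePoint in

theorem rat_not_locallyCompactSpace : ¬ LocallyCompactSpace ℚ := by
  intro h
  obtain ⟨s, hs, -, hsc⟩ := h.local_compact_nhds (0:ℚ) Set.univ Filter.univ_mem
  obtain ⟨ε, hε, hball⟩ := Metric.mem_nhds_iff.1 hs
  have hc : IsCompact ((Rat.cast : ℚ → ℝ) '' s) := hsc.image Rat.continuous_coe_real
  obtain ⟨x, hxirr, hx0, hxε⟩ := exists_irrational_btwn (show (0:ℝ) < ε from hε)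
  have hxmem : x ∈ closure ((Rat.cast : ℚ → ℝ) '' s) := by
    rw [Metric.mem_closure_iff]
    intro δ hδ
    obtain ⟨q, hq1, hq2⟩ := exists_rat_btwn (show x - min δ x < x by
      have : 0 < min δ x := lt_min hδ hx0; linarith)
    refine ⟨(q : ℝ), ⟨q, hball ?_, rfl⟩, ?_⟩
    · rw [Metric.mem_ball, Rat.dist_eq]
      push_cast
      rw [sub_zero]
      have : (0:ℝ) < q := by have := min_le_right δ x; linarith
      rw [abs_of_pos this]
      exact lt_trans hq2 hxε
    · rw [Real.dist_eq, abs_of_pos (by have := min_le_left δ x; linarith)]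
      have := min_le_left δ x; linarith
  rw [hc.isClosed.closure_eq] at hxmem
  obtain ⟨q, -, hqx⟩ := hxmem
  exact hxirr ⟨q, hqx⟩

open OnePoint in

theorem kc_onePoint_rat : ∀ K : Set (OnePoint ℚ), IsCompact K → IsClosed K := by
  intro K hK
  by_cases hinf : ∞ ∈ K
  · rw [OnePoint.isClosed_iff_of_mem hinf]
    refine IsSeqClosed.isClosed ?_
    intro s q hs hsq
    by_contra hq
    -- cluster point of the sequence in OnePoint ℚ
    have hle : Filter.map (fun n => ((s n : ℚ) : OnePoint ℚ)) Filter.atTop ≤ 𝓟 K := by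
      rw [Filter.le_principal_iff]
      exact Filter.mem_map.mpr (Filter.Eventually.of_forall hs)
    obtain ⟨y, hyK, hy⟩ := hK.exists_clusterPt hle
    have hcpt : IsCompact (insert q (Set.range s)) := hsq.isCompact_insert_range
    induction y using OnePoint.rec with
    | infty =>
      have hU : IsOpen (((↑) '' insert q (Set.range s) : Set (OnePoint ℚ))ᶜ) :=
        isOpen_compl_image_coe.2 ⟨hcpt.isClosed, hcpt⟩
      have h1 : (((↑) '' insert q (Set.range s) : Set (OnePoint ℚ))ᶜ) ∈ 𝓝 (∞ : OnePoint ℚ) :=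
        hU.mem_nhds infty_notMem_image_coe
      have h2 : Set.range (fun n => ((s n : ℚ) : OnePoint ℚ)) ∈
          Filter.map (fun n => ((s n : ℚ) : OnePoint ℚ)) Filter.atTop :=
        Filter.range_mem_map
      have := hy.neBot
      have hmem := Filter.inter_mem (Filter.mem_inf_of_left h1) (Filter.mem_inf_of_right h2)
      obtain ⟨z, hz1, n, rfl⟩ := Filter.nonempty_of_mem hmem
      exact hz1 ⟨s n, Or.inr ⟨n, rfl⟩, rfl⟩
    | coe z =>
      have hemb := OnePoint.isOpenEmbedding_coe (X := ℚ)
      have hzq : z = q := by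
        have h1 : ClusterPt z (Filter.map s Filter.atTop) := by
          have heq : (𝓝 ((z : ℚ) : OnePoint ℚ)) ⊓
              Filter.map (fun n => ((s n : ℚ) : OnePoint ℚ)) Filter.atTop =
              Filter.map ((↑) : ℚ → OnePoint ℚ) ((𝓝 z) ⊓ Filter.map s Filter.atTop) := by
            rw [Filter.map_inf OnePoint.coe_injective, hemb.map_nhds_eq, Filter.map_map]
            rfl
          have := hy
          rw [ClusterPt, heq] at this
          exact Filter.map_neBot_iff _ |>.mp this
        exact eq_of_nhds_neBot (h1.mono hsq)
      exact hq (hzq ▸ hyK)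
  · rw [OnePoint.isClosed_iff_of_notMem hinf]
    have hsub : K ⊆ Set.range ((↑) : ℚ → OnePoint ℚ) := by
      intro x hx
      rcases x with _ | x
      · exact absurd hx hinf
      · exact ⟨x, rfl⟩
    have himg : ((↑) : ℚ → OnePoint ℚ) '' ((↑) ⁻¹' K) = K := Set.image_preimage_eq_of_subset hsub
    have hKpre : IsCompact ((↑) ⁻¹' K : Set ℚ) := by
      rw [OnePoint.isOpenEmbedding_coe.isEmbedding.isCompact_iff, himg]
      exact hK
    exact ⟨hKpre.isClosed, hKpre⟩

/-- There is a KC space that is not k₁-Hausdorff. -/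
theorem exists_kc_not_k1Hausdorff :
    ∃ (X : Type) (_ : TopologicalSpace X), KCSpace X ∧ ¬ K1Hausdorff X := by
  refine ⟨OnePoint ℚ, inferInstance, kc_onePoint_rat, ?_⟩
  intro h
  have hK : IsCompact (Set.univ : Set (OnePoint ℚ × OnePoint ℚ)) := isCompact_univ
  have hcl := h _ hK
  have hdiag : IsClosed {p : OnePoint ℚ × OnePoint ℚ | p.1 = p.2} := by
    have h2 : IsClosed ((Homeomorph.Set.univ (OnePoint ℚ × OnePoint ℚ)).symm ⁻¹'
        (Subtype.val ⁻¹' {p : OnePoint ℚ × OnePoint ℚ | p.1 = p.2})) :=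
      hcl.preimage (Homeomorph.continuous _)
    convert h2 using 1
    rfl
  have ht2 : T2Space (OnePoint ℚ) := by
    rw [t2_iff_isClosed_diagonal]
    exact hdiag
  have hlc : LocallyCompactSpace ℚ := OnePoint.isOpenEmbedding_coe.locallyCompactSpace
  exact rat_not_locallyCompactSpace hlc
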